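/- Let G be a finite abelian group with |G| > 1, let a be a non-identity element of G, let p(G) be the smallest prime divisor of |G|, and let k < p(G) be a positive integer. For any (not necessarily distinct) b_1,...,b_k ∈ G, there is a permutation π ∈ S_k such that the products a^1·b_{π(1)}, a^2·b_{π(2)}, ..., a^k·b_{π(k)} are pairwise distinct. -/

import Mathlib

open Finset in
theorem perm_vandermonde_identity {R : Type*} [CommRing R] {r : ℕ} (A B : Fin r → R) :
    ∑ σ : Equiv.Perm (Fin r), ((Equiv.Perm.sign σ : ℤ) : R) *
        ∏ i : Fin r, ∏ j ∈ Finset.Ioi i, (B j * A (σ j) - B i * A (σ i)) =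
      (∑ τ : Equiv.Perm (Fin r), ∏ i : Fin r, B (τ i) ^ (i : ℕ)) *
        ∏ i : Fin r, ∏ j ∈ Finset.Ioi i, (A j - A i) := by
  have hdet : ∀ C : Fin r → R,
      ∏ i : Fin r, ∏ j ∈ Finset.Ioi i, (C j - C i)
        = ∑ τ : Equiv.Perm (Fin r), ((Equiv.Perm.sign τ : ℤ) : R) *
            ∏ i : Fin r, C (τ i) ^ (i : ℕ) := by
    intro C
    rw [← Matrix.det_vandermonde C, Matrix.det_apply']
    rfl
  have key : ∀ σ : Equiv.Perm (Fin r),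
      ∏ i : Fin r, ∏ j ∈ Finset.Ioi i, (B j * A (σ j) - B i * A (σ i))
        = ∑ τ : Equiv.Perm (Fin r), ((Equiv.Perm.sign τ : ℤ) : R) *
            ((∏ i : Fin r, B (τ i) ^ (i : ℕ)) * ∏ i : Fin r, A (σ (τ i)) ^ (i : ℕ)) := by
    intro σ
    rw [hdet (fun i => B i * A (σ i))]
    refine Finset.sum_congr rfl fun τ _ => ?_
    rw [← Finset.prod_mul_distrib]
    simp [mul_pow]
  simp_rw [key, Finset.mul_sum]
  rw [Finset.sum_comm]
  have inner : ∀ τ : Equiv.Perm (Fin r),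
      (∑ σ : Equiv.Perm (Fin r), ((Equiv.Perm.sign σ : ℤ) : R) *
          (((Equiv.Perm.sign τ : ℤ) : R) *
            ((∏ i : Fin r, B (τ i) ^ (i : ℕ)) * ∏ i : Fin r, A (σ (τ i)) ^ (i : ℕ))))
        = (∏ i : Fin r, B (τ i) ^ (i : ℕ)) * ∏ i : Fin r, ∏ j ∈ Finset.Ioi i, (A j - A i) := by
    intro τ
    rw [← Equiv.sum_comp (Equiv.mulRight τ⁻¹)
      (fun σ => ((Equiv.Perm.sign σ : ℤ) : R) *
          (((Equiv.Perm.sign τ : ℤ) : R) *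
            ((∏ i : Fin r, B (τ i) ^ (i : ℕ)) * ∏ i : Fin r, A (σ (τ i)) ^ (i : ℕ))))]
    have hsq : ((Equiv.Perm.sign τ : ℤ) : R) * ((Equiv.Perm.sign τ : ℤ) : R) = 1 := by
      rcases Int.units_eq_one_or (Equiv.Perm.sign τ) with h | h <;> rw [h] <;> norm_num
    have happ : ∀ (ρ : Equiv.Perm (Fin r)) (i : Fin r),
        ((Equiv.mulRight τ⁻¹ ρ) (τ i)) = ρ i := by
      intro ρ i
      simp [Equiv.Perm.mul_apply]
    calc ∑ ρ : Equiv.Perm (Fin r), ((Equiv.Perm.sign (Equiv.mulRight τ⁻¹ ρ) : ℤ) : R) *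
          (((Equiv.Perm.sign τ : ℤ) : R) *
            ((∏ i : Fin r, B (τ i) ^ (i : ℕ)) *
              ∏ i : Fin r, A ((Equiv.mulRight τ⁻¹ ρ) (τ i)) ^ (i : ℕ)))
        = ∑ ρ : Equiv.Perm (Fin r),
            (∏ i : Fin r, B (τ i) ^ (i : ℕ)) *
              (((Equiv.Perm.sign ρ : ℤ) : R) * ∏ i : Fin r, A (ρ i) ^ (i : ℕ)) := by
          refine Finset.sum_congr rfl fun ρ _ => ?_
          simp only [Equiv.coe_mulRight, map_mul, Equiv.Perm.sign_inv, Function.comp,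
            Equiv.Perm.mul_apply, Equiv.Perm.coe_inv, Equiv.symm_apply_apply]
          push_cast
          have hgen : ∀ X : R, ((Equiv.Perm.sign ρ : ℤ) : R) * ((Equiv.Perm.sign τ : ℤ) : R) *
              (((Equiv.Perm.sign τ : ℤ) : R) * X) = ((Equiv.Perm.sign ρ : ℤ) : R) * X := by
            intro X
            rw [mul_assoc, ← mul_assoc ((Equiv.Perm.sign τ : ℤ) : R), hsq, one_mul]
          rw [hgen]
          ring
      _ = (∏ i : Fin r, B (τ i) ^ (i : ℕ)) * ∏ i : Fin r, ∏ j ∈ Finset.Ioi i, (A j - A i) := by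
          rw [← Finset.mul_sum, hdet A]
  simp_rw [inner]
  rw [← Finset.sum_mul]

theorem core_exists {q t r : ℕ} (hq : q.Prime) (ht : 0 < t) (hr : r < q)
    {ζ : ℂ} (hζ : IsPrimitiveRoot ζ (q ^ t)) {h : ℂ} (hh : h ≠ 0)
    (x e : Fin r → ℕ) (hx : Function.Injective fun i => ζ ^ x i) :
    ∃ σ : Equiv.Perm (Fin r),
      Function.Injective fun i => ζ ^ x i * (h * ζ ^ e (σ i)) := by
  have hpow : 0 < q ^ t := pow_pos hq.pos t
  set A : Fin r → ℂ := fun i => ζ ^ x i with hA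
  set B : Fin r → ℂ := fun i => h * ζ ^ e i with hB
  have hS : (∑ τ : Equiv.Perm (Fin r), ζ ^ (∑ i : Fin r, e (τ i) * (i : ℕ))) ≠ 0 := by
    intro h0
    set P : Polynomial ℤ :=
      ∑ τ : Equiv.Perm (Fin r), Polynomial.X ^ (∑ i : Fin r, e (τ i) * (i : ℕ)) with hP
    have haev : Polynomial.aeval ζ P = 0 := by
      rw [hP]
      simpa [map_sum] using h0
    have hint : IsIntegral ℤ ζ := hζ.isIntegral hpow
    have hdvd : Polynomial.cyclotomic (q ^ t) ℤ ∣ P := by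
      rw [Polynomial.cyclotomic_eq_minpoly hζ hpow]
      exact minpoly.isIntegrallyClosed_dvd hint haev
    obtain ⟨Q, hQ⟩ := hdvd
    have h1 : P.eval 1 = (Nat.factorial r : ℤ) := by
      rw [hP]
      simp [Polynomial.eval_finset_sum, Fintype.card_perm]
    have hqd : (q : ℤ) ∣ P.eval 1 := by
      rw [hQ, Polynomial.eval_mul]
      obtain ⟨t', rfl⟩ : ∃ t', t = t' + 1 := ⟨t - 1, by omega⟩
      haveI : Fact q.Prime := ⟨hq⟩
      rw [Polynomial.eval_one_cyclotomic_prime_pow]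
      exact Dvd.intro _ rfl
    rw [h1] at hqd
    have : q ∣ Nat.factorial r := by exact_mod_cast hqd
    exact absurd ((Nat.Prime.dvd_factorial hq).mp this) (by omega)
  have hPer : (∑ τ : Equiv.Perm (Fin r), ∏ i : Fin r, B (τ i) ^ (i : ℕ)) ≠ 0 := by
    have hexp : ∀ τ : Equiv.Perm (Fin r), ∏ i : Fin r, B (τ i) ^ (i : ℕ)
        = (∏ i : Fin r, h ^ (i : ℕ)) * ζ ^ (∑ i : Fin r, e (τ i) * (i : ℕ)) := by
      intro τ
      rw [hB]
      simp only [mul_pow]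
      rw [Finset.prod_mul_distrib]
      congr 1
      rw [← Finset.prod_pow_eq_pow_sum]
      exact Finset.prod_congr rfl fun i _ => by rw [pow_mul]
    simp_rw [hexp]
    rw [← Finset.mul_sum]
    exact mul_ne_zero (Finset.prod_ne_zero_iff.mpr fun i _ => pow_ne_zero _ hh) hS
  have hV : (∏ i : Fin r, ∏ j ∈ Finset.Ioi i, (A j - A i)) ≠ 0 := by
    rw [Finset.prod_ne_zero_iff]
    intro i _
    rw [Finset.prod_ne_zero_iff]
    intro j hj
    exact sub_ne_zero_of_ne fun hEq => (Finset.mem_Ioi.mp hj).ne' (hx hEq)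
  have hL : (∑ σ : Equiv.Perm (Fin r), ((Equiv.Perm.sign σ : ℤ) : ℂ) *
      ∏ i : Fin r, ∏ j ∈ Finset.Ioi i, (B j * A (σ j) - B i * A (σ i))) ≠ 0 := by
    rw [perm_vandermonde_identity]
    exact mul_ne_zero hPer hV
  obtain ⟨σ, -, hσ⟩ := Finset.exists_ne_zero_of_sum_ne_zero hL
  have hprodne := right_ne_zero_of_mul hσ
  have hprod : ∀ i j : Fin r, i < j → B j * A (σ j) ≠ B i * A (σ i) := by
    intro i j hij hEq
    apply hprodne
    rw [Finset.prod_eq_zero (Finset.mem_univ i)]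
    exact Finset.prod_eq_zero (Finset.mem_Ioi.mpr hij) (by rw [hEq, sub_self])
  refine ⟨σ⁻¹, ?_⟩
  intro i j hEq
  simp only at hEq
  have hEq' : B (σ⁻¹ i) * A (σ (σ⁻¹ i)) = B (σ⁻¹ j) * A (σ (σ⁻¹ j)) := by
    rw [show σ (σ⁻¹ i) = i from σ.apply_symm_apply i, show σ (σ⁻¹ j) = j from σ.apply_symm_apply j]
    rw [mul_comm (B (σ⁻¹ i)), mul_comm (B (σ⁻¹ j))]
    exact hEq
  have huv : σ⁻¹ i = σ⁻¹ j := by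
    by_contra hne
    rcases lt_or_gt_of_ne hne with hlt | hlt
    · exact hprod _ _ hlt hEq'.symm
    · exact hprod _ _ hlt hEq'
  simpa using congrArg σ huv
/-- Corollary 1.7: for `a ≠ 1` in a nontrivial finite abelian group `G` and
`k < p(G)` (least prime divisor of `|G|`), some permutation makes the products
`a^(i+1) * b (π i)`, `i = 0, ..., k-1`, pairwise distinct. -/
theorem powers_snevily {G : Type*} [CommGroup G] [Fintype G]
    (hG : 1 < Fintype.card G) (a : G) (haa : a ≠ 1)
    {k : ℕ} (hk : 0 < k) (hkp : k < (Fintype.card G).minFac) (b : Fin k → G) :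
    ∃ π : Equiv.Perm (Fin k),
      Function.Injective (fun i : Fin k => a ^ ((i : ℕ) + 1) * b (π i)) := by
  classical
  haveI : NeZero ((Monoid.exponent G : ℂ)) :=
    ⟨Nat.cast_ne_zero.mpr Monoid.exponent_ne_zero_of_finite⟩
  obtain ⟨φ, hφ⟩ := CommGroup.exists_apply_ne_one_of_hasEnoughRootsOfUnity G ℂ haa
  set d := orderOf (φ a) with hd
  have hdvd1 : d ∣ orderOf a := orderOf_map_dvd φ a
  have hao : orderOf a ≠ 0 := (orderOf_pos a).ne'
  have hd0 : d ≠ 0 := fun h0 => hao (Nat.eq_zero_of_zero_dvd (h0 ▸ hdvd1))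
  have hd1 : d ≠ 1 := fun h1 => hφ (orderOf_eq_one_iff.mp h1)
  set q := d.minFac with hqdef
  have hq : q.Prime := Nat.minFac_prime hd1
  set t := d.factorization q with htdef
  have ht : 0 < t := hq.factorization_pos_of_dvd hd0 d.minFac_dvd
  set m := d / q ^ t with hm
  have hmd : m ∣ d := Nat.ordCompl_dvd d q
  have hdqm : q ^ t * m = d := Nat.ordProj_mul_ordCompl_eq_self d q
  have hm0 : m ≠ 0 := by
    intro h0
    rw [h0, mul_zero] at hdqm
    exact hd0 hdqm.symm
  set u : ℂˣ := φ a ^ m with hu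
  have horder : orderOf u = q ^ t := by
    rw [hu, orderOf_pow' _ hm0, ← hd, Nat.gcd_eq_right hmd, ← hdqm,
      Nat.mul_div_cancel _ (Nat.pos_of_ne_zero hm0)]
  set ζ : ℂ := (u : ℂ) with hζdef
  have hζ : IsPrimitiveRoot ζ (q ^ t) :=
    IsPrimitiveRoot.coe_units_iff.mpr (horder ▸ IsPrimitiveRoot.orderOf u)
  have hqcard : q ∣ Fintype.card G := (d.minFac_dvd.trans hdvd1).trans orderOf_dvd_card
  have hkq : k < q := hkp.trans_le (Nat.minFac_le_of_dvd hq.two_le hqcard)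
  have hkn : k < q ^ t := hkq.trans_le (Nat.le_self_pow ht.ne' q)
  set β : Fin k → ℂ := fun j => ((φ (b j) ^ m : ℂˣ) : ℂ) with hβ
  have hβ0 : ∀ j, β j ≠ 0 := fun j => Units.ne_zero _
  set s : Setoid (Fin k) := ⟨fun i j => ∃ c c' : ℕ, β i * ζ ^ c = β j * ζ ^ c',
    ⟨fun i => ⟨0, 0, rfl⟩,
     fun {i j} hij => by
       obtain ⟨c, c', hcc⟩ := hij
       exact ⟨c', c, hcc.symm⟩,
     fun {i j l} hij hjl => by
       obtain ⟨c, c', h1⟩ := hij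
       obtain ⟨dd, dd', h2⟩ := hjl
       refine ⟨c + dd, dd' + c', ?_⟩
       rw [pow_add, ← mul_assoc, h1, mul_assoc, mul_comm (ζ ^ c'), ← mul_assoc, h2,
         mul_assoc, ← pow_add]⟩⟩ with hs
  have hclass : ∀ c : Quotient s,
      ∃ σc : {i : Fin k // Quotient.mk s i = c} ≃ {i : Fin k // Quotient.mk s i = c},
        Function.Injective (fun i : {i : Fin k // Quotient.mk s i = c} =>
          ζ ^ ((i.1 : ℕ) + 1) * β (σc i).1) := by
    intro c
    obtain ⟨i₀, hi₀⟩ := Quotient.exists_rep c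
    set F := {i : Fin k // Quotient.mk s i = c} with hF
    set r := Fintype.card F with hr
    have hrk : r ≤ k := by
      have := Fintype.card_subtype_le (fun i : Fin k => Quotient.mk s i = c)
      simpa [hr] using this
    set ι : Fin r ≃ F := (Fintype.equivFin F).symm with hι
    have hrel : ∀ i : F, ∃ ec : ℕ, β i.1 = β i₀ * ζ ^ ec := by
      intro i
      obtain ⟨cc, cc', hcc⟩ := Quotient.exact (i.2.trans hi₀.symm)
      refine ⟨cc' + (q ^ t - 1) * cc, ?_⟩
      have hz : ζ ^ (q ^ t) = 1 := hζ.pow_eq_one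
      have hself : β i.1 * ζ ^ cc * ζ ^ ((q ^ t - 1) * cc) = β i.1 := by
        rw [mul_assoc, ← pow_add]
        have harith : cc + (q ^ t - 1) * cc = q ^ t * cc := by
          have h1 : 1 ≤ q ^ t := Nat.one_le_iff_ne_zero.mpr (pow_ne_zero t hq.pos.ne')
          obtain ⟨w, hw⟩ := Nat.exists_eq_add_of_le h1
          rw [hw, Nat.add_sub_cancel_left]
          ring
        rw [harith, pow_mul, hz, one_pow, mul_one]
      calc β i.1 = β i.1 * ζ ^ cc * ζ ^ ((q ^ t - 1) * cc) := hself.symm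
        _ = β i₀ * ζ ^ cc' * ζ ^ ((q ^ t - 1) * cc) := by rw [hcc]
        _ = β i₀ * ζ ^ (cc' + (q ^ t - 1) * cc) := by rw [mul_assoc, ← pow_add]
    choose e he using hrel
    set x : Fin r → ℕ := fun mm => ((ι mm).1 : ℕ) + 1 with hx'
    have hxlt : ∀ mm, x mm < q ^ t := by
      intro mm
      have h1 : ((ι mm).1 : ℕ) < k := (ι mm).1.2
      simp only [hx']
      omega
    have hx : Function.Injective fun mm => ζ ^ x mm := by
      intro mm mm' hEq
      have h2 := hζ.pow_inj (hxlt mm) (hxlt mm') hEq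
      simp only [hx'] at h2
      have hval : ((ι mm).1 : ℕ) = ((ι mm').1 : ℕ) := by omega
      exact ι.injective (Subtype.ext (Fin.ext hval))
    obtain ⟨σ', hσ'⟩ := core_exists hq ht (lt_of_le_of_lt hrk hkq) hζ (hβ0 i₀)
      x (fun mm => e (ι mm)) hx
    refine ⟨(ι.symm.trans σ').trans ι, ?_⟩
    intro i i' hEq
    simp only [Equiv.trans_apply] at hEq
    have hEq2 : (fun mm => ζ ^ x mm * (β i₀ * ζ ^ e (ι (σ' mm)))) (ι.symm i)
        = (fun mm => ζ ^ x mm * (β i₀ * ζ ^ e (ι (σ' mm)))) (ι.symm i') := by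
      simp only [hx']
      simp only [Equiv.apply_symm_apply]
      rw [← he (ι (σ' (ι.symm i))), ← he (ι (σ' (ι.symm i')))]
      exact hEq
    have := hσ' hEq2
    have := congrArg ι this
    simpa using this
  choose σs hσs using hclass
  set f : Fin k → Quotient s := fun i => Quotient.mk s i with hf
  set π : Equiv.Perm (Fin k) :=
    ((Equiv.sigmaFiberEquiv f).symm.trans
      ((Equiv.sigmaCongrRight σs).trans (Equiv.sigmaFiberEquiv f))) with hπdef
  have hπ : ∀ (i : Fin k) (c : Quotient s) (hc : f i = c), π i = (σs c ⟨i, hc⟩).1 := by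
    intro i c hc
    subst hc
    rfl
  have hmap : ∀ (i : Fin k) (j : Fin k),
      ((φ (a ^ ((i : ℕ) + 1) * b j) ^ m : ℂˣ) : ℂ) = ζ ^ ((i : ℕ) + 1) * β j := by
    intro i j
    have hunits : φ (a ^ ((i : ℕ) + 1) * b j) ^ m = u ^ ((i : ℕ) + 1) * φ (b j) ^ m := by
      rw [map_mul, map_pow, mul_pow, hu, pow_right_comm]
    rw [hunits, Units.val_mul, Units.val_pow_eq_pow_val]
  refine ⟨π, ?_⟩
  intro i₁ i₂ hEq
  simp only at hEq
  have hC : ζ ^ ((i₁ : ℕ) + 1) * β (π i₁) = ζ ^ ((i₂ : ℕ) + 1) * β (π i₂) := by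
    rw [← hmap i₁ (π i₁), ← hmap i₂ (π i₂), hEq]
  have hrelπ : f (π i₁) = f (π i₂) := by
    apply Quotient.sound
    exact ⟨(i₁ : ℕ) + 1, (i₂ : ℕ) + 1, by
      rw [mul_comm (β (π i₁)), mul_comm (β (π i₂))]; exact hC⟩
  have hπclass : ∀ i : Fin k, f (π i) = f i := by
    intro i
    rw [hπ i (f i) rfl]
    exact (σs (f i) ⟨i, rfl⟩).2
  have hcc : f i₂ = f i₁ := by
    rw [← hπclass i₁, ← hπclass i₂, hrelπ]
  have hkey := hσs (f i₁)
  have hval : (⟨i₁, rfl⟩ : {i : Fin k // Quotient.mk s i = f i₁})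
      = (⟨i₂, hcc⟩ : {i : Fin k // Quotient.mk s i = f i₁}) := by
    apply hkey
    simp only
    rw [← hπ i₁ (f i₁) rfl, ← hπ i₂ (f i₁) hcc]
    exact hC
  simpa using congrArg Subtype.val hval
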